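/- Let γ ∈ (0,1), α, β ∈ [0,1), and let the index set {1,…,n} be partitioned into a core C with |C| = l ≥ 1 and a periphery P with |P| = m ≥ 1. Let G be an n×n real matrix with nonnegative entries and zero diagonal such that G i j = 0 whenever j ∈ P, Σ_{j∈C} G i j = β for every i ∈ C, and Σ_{j∈C} G i j = α for every i ∈ P. Then the Katz–Bonacich centrality vector c = (I − γ·G)⁻¹ 𝟙 satisfies c_i = 1/(1−γβ) for i ∈ C and c_i = (1 + γ(α−β))/(1−γβ) for i ∈ P, and Σ_{i=1}^{n} c_i·( (1 − d_i^in)·c_i + 2·d_i^in ) = ( m·f(α,β,γ) + l·(1 − β(2γβ − 1)) ) / (1−γβ)², where d_i^in = Σ_{j≠i} G j i and f(α,β,γ) = (1 + γ(α−β))² − α(2γβ − 1). -/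

import Mathlib

open Matrix Finset

/-- In a directed core-periphery network (core `C` of size `l`,
periphery `P` of size `m`, all out-links pointing to the core, core out-degree `β`
and peripheral out-degree `α`), the Katz–Bonacich centralities are `1/(1-γβ)` on the
core and `(1+γ(α-β))/(1-γβ)` on the periphery, and the welfare expression equals
`(m·f(α,β,γ) + l·(1 - β(2γβ-1)))/(1-γβ)²`. -/
theorem stmt13 (n l m : ℕ) (hl : 1 ≤ l) (hm : 1 ≤ m)
    (γ α β : ℝ) (hγ : γ ∈ Set.Ioo (0 : ℝ) 1)
    (hα : α ∈ Set.Ico (0 : ℝ) 1) (hβ : β ∈ Set.Ico (0 : ℝ) 1)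
    (C P : Finset (Fin n)) (hdisj : Disjoint C P) (hunion : C ∪ P = Finset.univ)
    (hcardC : C.card = l) (hcardP : P.card = m)
    (G : Matrix (Fin n) (Fin n) ℝ)
    (hpos : ∀ i j, 0 ≤ G i j) (hdiag : ∀ i, G i i = 0)
    (hP : ∀ i j, j ∈ P → G i j = 0)
    (hcore : ∀ i ∈ C, ∑ j ∈ C, G i j = β)
    (hperi : ∀ i ∈ P, ∑ j ∈ C, G i j = α)
    (c : Fin n → ℝ) (hc : c = (1 - γ • G)⁻¹ *ᵥ fun _ => 1)
    (din : Fin n → ℝ) (hdin : ∀ i, din i = ∑ j ∈ Finset.univ.erase i, G j i) :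
    (∀ i ∈ C, c i = 1 / (1 - γ * β)) ∧
    (∀ i ∈ P, c i = (1 + γ * (α - β)) / (1 - γ * β)) ∧
    (∑ i, c i * ((1 - din i) * c i + 2 * din i)
      = (m * ((1 + γ * (α - β)) ^ 2 - α * (2 * γ * β - 1))
          + l * (1 - β * (2 * γ * β - 1))) / (1 - γ * β) ^ 2) := by
  obtain ⟨hγ0, hγ1⟩ := hγ
  obtain ⟨hα0, hα1⟩ := hα
  obtain ⟨hβ0, hβ1⟩ := hβ
  have hden : (0:ℝ) < 1 - γ * β := by nlinarith
  have hdne : (1 - γ * β) ≠ 0 := ne_of_gt hden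
  set a : ℝ := 1 / (1 - γ * β) with ha
  set b : ℝ := (1 + γ * (α - β)) / (1 - γ * β) with hb
  set v : Fin n → ℝ := fun i => if i ∈ C then a else b with hv
  -- membership dichotomy
  have hmem : ∀ i : Fin n, i ∈ C ∨ i ∈ P := by
    intro i
    have : i ∈ C ∪ P := hunion ▸ Finset.mem_univ i
    exact Finset.mem_union.mp this
  have hnotC : ∀ i ∈ P, i ∉ C := fun i hi hiC =>
    (Finset.disjoint_left.mp hdisj hiC hi)
  -- splitting sums
  have hsplit : ∀ f : Fin n → ℝ, ∑ i, f i = ∑ i ∈ C, f i + ∑ i ∈ P, f i := by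
    intro f
    rw [← Finset.sum_union hdisj, hunion]
  -- row sums over all of univ
  have hrow : ∀ (i : Fin n) (w : Fin n → ℝ),
      ∑ j, G i j * w j = ∑ j ∈ C, G i j * w j := by
    intro i w
    rw [hsplit]
    have : ∑ j ∈ P, G i j * w j = 0 :=
      Finset.sum_eq_zero fun j hj => by rw [hP i j hj, zero_mul]
    rw [this, add_zero]
  have hGv : ∀ i : Fin n, ∑ j, G i j * v j = (if i ∈ C then β else α) * a := by
    intro i
    rw [hrow]
    have : ∑ j ∈ C, G i j * v j = (∑ j ∈ C, G i j) * a := by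
      rw [Finset.sum_mul]
      refine Finset.sum_congr rfl fun j hj => ?_
      simp [hv, hj]
    rw [this]
    rcases hmem i with hi | hi
    · rw [hcore i hi, if_pos hi]
    · rw [hperi i hi, if_neg (hnotC i hi)]
  -- the matrix A
  set A : Matrix (Fin n) (Fin n) ℝ := 1 - γ • G with hA
  have hAv : A *ᵥ v = fun _ => 1 := by
    funext i
    rw [hA, Matrix.sub_mulVec, Matrix.one_mulVec, Matrix.smul_mulVec]
    have : (G *ᵥ v) i = ∑ j, G i j * v j := rfl
    simp only [Pi.sub_apply, Pi.smul_apply, this, hGv i, smul_eq_mul]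
    rcases hmem i with hi | hi
    · rw [if_pos hi]
      simp only [hv, if_pos hi, ha]
      field_simp
    · rw [if_neg (hnotC i hi)]
      simp only [hv, if_neg (hnotC i hi), hb, ha]
      field_simp
      ring
  -- invertibility
  have hdet : A.det ≠ 0 := by
    apply det_ne_zero_of_sum_row_lt_diag
    intro k
    have hAkk : A k k = 1 := by simp [hA, hdiag k]
    have hrs : ∑ j ∈ Finset.univ.erase k, ‖A k j‖ = γ * ∑ j ∈ C, G k j := by
      have h1 : ∀ j ∈ Finset.univ.erase k, ‖A k j‖ = γ * G k j := by
        intro j hj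
        have hjk : j ≠ k := (Finset.mem_erase.mp hj).1
        have : A k j = -(γ * G k j) := by
          simp [hA, Matrix.one_apply_ne' hjk]
        rw [this, norm_neg, Real.norm_eq_abs, abs_of_nonneg
          (mul_nonneg (le_of_lt hγ0) (hpos k j))]
      rw [Finset.sum_congr rfl h1, ← Finset.mul_sum]
      congr 1
      rw [Finset.sum_erase _ (hdiag k)]
      simpa using hrow k (fun _ => 1)
    rw [hrs, hAkk, norm_one]
    rcases hmem k with hk | hk
    · rw [hcore k hk]; nlinarith
    · rw [hperi k hk]; nlinarith
  have hcv : c = v := by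
    rw [hc, ← hAv, Matrix.mulVec_mulVec, Matrix.nonsing_inv_mul A (isUnit_iff_ne_zero.mpr hdet),
      Matrix.one_mulVec]
  have hcC : ∀ i ∈ C, c i = a := fun i hi => by rw [hcv]; simp [hv, hi]
  have hcP : ∀ i ∈ P, c i = b := fun i hi => by
    rw [hcv]; simp [hv, hnotC i hi]
  refine ⟨hcC, hcP, ?_⟩
  -- in-degrees
  have hdinP : ∀ i ∈ P, din i = 0 := by
    intro i hi
    rw [hdin i]
    exact Finset.sum_eq_zero fun j _ => hP j i hi
  have hdinfull : ∀ i, din i = ∑ j, G j i := by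
    intro i
    rw [hdin i]
    exact Finset.sum_erase _ (hdiag i)
  have hdinsum : ∑ i ∈ C, din i = l * β + m * α := by
    have h1 : ∑ i ∈ C, din i = ∑ j, ∑ i ∈ C, G j i := by
      exact (Finset.sum_congr rfl fun i _ => hdinfull i).trans Finset.sum_comm
    rw [h1, hsplit]
    rw [Finset.sum_congr rfl hcore, Finset.sum_congr rfl hperi]
    simp [hcardC, hcardP, mul_comm]
  -- final computation
  rw [hsplit]
  have hSC : ∑ i ∈ C, c i * ((1 - din i) * c i + 2 * din i)
      = l * (a * a) + (2 * a - a * a) * (l * β + m * α) := by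
    have : ∀ i ∈ C, c i * ((1 - din i) * c i + 2 * din i)
        = a * a + (2 * a - a * a) * din i := by
      intro i hi
      rw [hcC i hi]; ring
    rw [Finset.sum_congr rfl this, Finset.sum_add_distrib, Finset.sum_const, ← Finset.mul_sum,
      hdinsum, hcardC]
    push_cast
    ring
  have hSP : ∑ i ∈ P, c i * ((1 - din i) * c i + 2 * din i) = m * (b * b) := by
    have : ∀ i ∈ P, c i * ((1 - din i) * c i + 2 * din i) = b * b := by
      intro i hi
      rw [hcP i hi, hdinP i hi]; ring
    rw [Finset.sum_congr rfl this, Finset.sum_const, hcardP]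
    push_cast
    ring
  rw [hSC, hSP, ha, hb]
  field_simp
  ring
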